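/- Let α ≥ 1 be an integer and M ≥ 1, and λ real. Then |∫₁^M x·e^{2πi(αx²+βx)λ} dx| ≤ min{M², (2πα|λ|)^{−1} + 2πM³|β||λ|} for any integer β (with the second bound valid for λ ≠ 0). -/

import Mathlib

open Complex intervalIntegral


-- ‖e^{iθ} - 1‖ ≤ |θ|
lemma norm_exp_real_mul_I_sub_one_le (θ : ℝ) : ‖Complex.exp ((θ : ℂ) * Complex.I) - 1‖ ≤ |θ| := by
  have key : Complex.exp ((θ : ℂ) * Complex.I) - 1
      = Complex.exp (((θ/2 : ℝ) : ℂ) * Complex.I) * (2 * Complex.sin ((θ/2 : ℝ)) * Complex.I) := by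
    rw [Complex.sin, neg_mul, Complex.exp_neg]
    have h := Complex.exp_ne_zero (((θ/2 : ℝ) : ℂ) * Complex.I)
    field_simp
    have h2 : Complex.exp ((θ : ℂ) * Complex.I) = Complex.exp (Complex.I * ((θ / 2 : ℝ) : ℂ)) ^ 2 := by
      rw [sq, ← Complex.exp_add]; congr 1; push_cast; ring
    rw [h2]
    ring_nf
    rw [Complex.I_sq]
    ring
  rw [key]
  rw [norm_mul, norm_mul, norm_mul, Complex.norm_exp_ofReal_mul_I, Complex.norm_I, one_mul, mul_one]
  have : ‖Complex.sin ((θ/2 : ℝ) : ℂ)‖ = |Real.sin (θ/2)| := by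
    rw [← Complex.ofReal_sin]
    exact Complex.norm_real _
  rw [this]
  have := Real.abs_sin_le_abs (x := θ/2)
  have h2 : ‖(2 : ℂ)‖ = 2 := by norm_num
  rw [h2]
  calc 2 * |Real.sin (θ/2)| ≤ 2 * |θ/2| := by linarith
    _ = |θ| := by rw [abs_div, _root_.abs_two]; ring

-- derivative of x ↦ exp((a x²) I)
lemma hasDerivAt_exp_sq (a x : ℝ) :
    HasDerivAt (fun x : ℝ => Complex.exp (((a * x ^ 2 : ℝ) : ℂ) * Complex.I))
      (((2 * a * x : ℝ) : ℂ) * Complex.I * Complex.exp (((a * x ^ 2 : ℝ) : ℂ) * Complex.I)) x := by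
  have h1 : HasDerivAt (fun x : ℝ => a * x ^ 2) (2 * a * x) x := by
    simpa [mul_comm, mul_assoc, mul_left_comm] using (hasDerivAt_pow 2 x).const_mul a
  have h2 : HasDerivAt (fun x : ℝ => ((a * x ^ 2 : ℝ) : ℂ)) ((2 * a * x : ℝ) : ℂ) x :=
    h1.ofReal_comp
  have h3 := (h2.mul_const Complex.I).cexp
  simpa [mul_comm, mul_assoc, mul_left_comm] using h3

lemma osc_integral (a : ℝ) (ha : a ≠ 0) (M : ℝ) :
    ∫ x in (1:ℝ)..M, (x : ℂ) * Complex.exp (((a * x ^ 2 : ℝ) : ℂ) * Complex.I)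
      = (Complex.exp (((a * M ^ 2 : ℝ) : ℂ) * Complex.I)
          - Complex.exp (((a : ℝ) : ℂ) * Complex.I)) / (2 * (a : ℂ) * Complex.I) := by
  have key : ∀ x : ℝ, HasDerivAt
      (fun x : ℝ => Complex.exp (((a * x ^ 2 : ℝ) : ℂ) * Complex.I) / (2 * (a : ℂ) * Complex.I))
      ((x : ℂ) * Complex.exp (((a * x ^ 2 : ℝ) : ℂ) * Complex.I)) x := by
    intro x
    have := (hasDerivAt_exp_sq a x).div_const (2 * (a : ℂ) * Complex.I)
    convert this using 1
    · rfl
    have ha' : (a : ℂ) ≠ 0 := by exact_mod_cast ha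
    push_cast
    rw [eq_div_iff (by simp [ha'] : (2 * (a : ℂ) * Complex.I) ≠ 0)]
    ring
  have hcont : IntervalIntegrable
      (fun x : ℝ => (x : ℂ) * Complex.exp (((a * x ^ 2 : ℝ) : ℂ) * Complex.I))
      MeasureTheory.volume 1 M := by
    apply Continuous.intervalIntegrable
    continuity
  have := intervalIntegral.integral_eq_sub_of_hasDerivAt (fun x _ => key x) hcont
  rw [this]
  rw [div_sub_div_same]
  norm_num

theorem combined_integral_bound (α β : ℤ) (hα : 1 ≤ α) (M : ℝ) (hM : 1 ≤ M) (lam : ℝ) :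
    ‖∫ x in (1 : ℝ)..M, (x : ℂ) *
        Complex.exp ((2 * Real.pi * (((α : ℝ) * x ^ 2 + (β : ℝ) * x) * lam) : ℝ) * Complex.I)‖
      ≤ M ^ 2 ∧
    (lam ≠ 0 →
      ‖∫ x in (1 : ℝ)..M, (x : ℂ) *
          Complex.exp ((2 * Real.pi * (((α : ℝ) * x ^ 2 + (β : ℝ) * x) * lam) : ℝ) * Complex.I)‖
        ≤ (2 * Real.pi * (α : ℝ) * |lam|)⁻¹ + 2 * Real.pi * M ^ 3 * |(β : ℝ)| * |lam|) := by
  have hpi := Real.pi_pos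
  constructor
  · -- trivial bound
    have h1 : ‖∫ x in (1 : ℝ)..M, (x : ℂ) *
        Complex.exp ((2 * Real.pi * (((α : ℝ) * x ^ 2 + (β : ℝ) * x) * lam) : ℝ) * Complex.I)‖
        ≤ M * |M - 1| := by
      apply intervalIntegral.norm_integral_le_of_norm_le_const
      intro x hx
      rw [Set.uIoc_of_le hM] at hx
      rw [norm_mul, Complex.norm_real, Complex.norm_exp_ofReal_mul_I, mul_one]
      rw [Real.norm_eq_abs, _root_.abs_of_nonneg (by linarith [hx.1] : (0:ℝ) ≤ x)]
      exact hx.2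
    calc _ ≤ M * |M - 1| := h1
      _ ≤ M * M := by
          apply mul_le_mul_of_nonneg_left _ (by linarith)
          rw [_root_.abs_of_nonneg (by linarith)]; linarith
      _ = M ^ 2 := by ring
  · intro hlam
    set a : ℝ := 2 * Real.pi * (α : ℝ) * lam with ha_def
    set b : ℝ := 2 * Real.pi * (β : ℝ) * lam with hb_def
    have hαpos : (0:ℝ) < (α : ℝ) := by exact_mod_cast hα.trans_lt' (by norm_num)
    have ha : a ≠ 0 := by
      simp only [ha_def]
      positivity
    -- pointwise decomposition
    have hpt : ∀ x : ℝ, (x : ℂ) *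
        Complex.exp ((2 * Real.pi * (((α : ℝ) * x ^ 2 + (β : ℝ) * x) * lam) : ℝ) * Complex.I)
        = (x : ℂ) * Complex.exp (((a * x ^ 2 : ℝ) : ℂ) * Complex.I)
          + (x : ℂ) * Complex.exp (((a * x ^ 2 : ℝ) : ℂ) * Complex.I)
              * (Complex.exp (((b * x : ℝ) : ℂ) * Complex.I) - 1) := by
      intro x
      have harg : (2 * Real.pi * (((α : ℝ) * x ^ 2 + (β : ℝ) * x) * lam) : ℝ)
          = a * x ^ 2 + b * x := by rw [ha_def, hb_def]; ring
      rw [harg]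
      push_cast
      rw [add_mul, Complex.exp_add]
      ring
    have hint1 : IntervalIntegrable
        (fun x : ℝ => (x : ℂ) * Complex.exp (((a * x ^ 2 : ℝ) : ℂ) * Complex.I))
        MeasureTheory.volume 1 M := by
      apply Continuous.intervalIntegrable; continuity
    have hint2 : IntervalIntegrable
        (fun x : ℝ => (x : ℂ) * Complex.exp (((a * x ^ 2 : ℝ) : ℂ) * Complex.I)
          * (Complex.exp (((b * x : ℝ) : ℂ) * Complex.I) - 1))
        MeasureTheory.volume 1 M := by
      apply Continuous.intervalIntegrable; continuity
    have hsplit : (∫ x in (1 : ℝ)..M, (x : ℂ) *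
        Complex.exp ((2 * Real.pi * (((α : ℝ) * x ^ 2 + (β : ℝ) * x) * lam) : ℝ) * Complex.I))
        = (∫ x in (1 : ℝ)..M, (x : ℂ) * Complex.exp (((a * x ^ 2 : ℝ) : ℂ) * Complex.I))
          + ∫ x in (1 : ℝ)..M, (x : ℂ) * Complex.exp (((a * x ^ 2 : ℝ) : ℂ) * Complex.I)
              * (Complex.exp (((b * x : ℝ) : ℂ) * Complex.I) - 1) := by
      rw [← intervalIntegral.integral_add hint1 hint2]
      exact intervalIntegral.integral_congr (fun x _ => hpt x)
    rw [hsplit]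
    have hb1 : ‖∫ x in (1 : ℝ)..M, (x : ℂ) * Complex.exp (((a * x ^ 2 : ℝ) : ℂ) * Complex.I)‖
        ≤ (2 * Real.pi * (α : ℝ) * |lam|)⁻¹ := by
      rw [osc_integral a ha M, norm_div]
      have hnum : ‖Complex.exp (((a * M ^ 2 : ℝ) : ℂ) * Complex.I)
          - Complex.exp (((a : ℝ) : ℂ) * Complex.I)‖ ≤ 2 := by
        calc _ ≤ ‖Complex.exp (((a * M ^ 2 : ℝ) : ℂ) * Complex.I)‖
              + ‖Complex.exp (((a : ℝ) : ℂ) * Complex.I)‖ := norm_sub_le _ _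
          _ ≤ 2 := by rw [Complex.norm_exp_ofReal_mul_I, Complex.norm_exp_ofReal_mul_I]; norm_num
      have hden : ‖(2 * (a : ℂ) * Complex.I)‖ = 2 * |a| := by
        rw [norm_mul, norm_mul, Complex.norm_I, mul_one, Complex.norm_real]
        norm_num
      rw [hden]
      have h2a : (0:ℝ) < 2 * |a| := by positivity
      rw [div_le_iff₀ h2a]
      have haa : |a| = 2 * Real.pi * (α : ℝ) * |lam| := by
        rw [ha_def, abs_mul, _root_.abs_of_nonneg (by positivity : (0:ℝ) ≤ 2 * Real.pi * (α:ℝ))]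
      rw [haa]
      rw [inv_mul_eq_div, mul_div_assoc,
        div_self (ne_of_gt (by positivity : (0:ℝ) < 2 * Real.pi * (α : ℝ) * |lam|)), mul_one]
      exact hnum
    have hb2 : ‖∫ x in (1 : ℝ)..M, (x : ℂ) * Complex.exp (((a * x ^ 2 : ℝ) : ℂ) * Complex.I)
          * (Complex.exp (((b * x : ℝ) : ℂ) * Complex.I) - 1)‖
        ≤ 2 * Real.pi * M ^ 3 * |(β : ℝ)| * |lam| := by
      have hbM : ‖∫ x in (1 : ℝ)..M, (x : ℂ) * Complex.exp (((a * x ^ 2 : ℝ) : ℂ) * Complex.I)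
          * (Complex.exp (((b * x : ℝ) : ℂ) * Complex.I) - 1)‖ ≤ (M * (|b| * M)) * |M - 1| := by
        apply intervalIntegral.norm_integral_le_of_norm_le_const
        intro x hx
        rw [Set.uIoc_of_le hM] at hx
        have hx0 : (0:ℝ) < x := by linarith [hx.1]
        rw [norm_mul, norm_mul, Complex.norm_real, Complex.norm_exp_ofReal_mul_I, mul_one]
        have h1 : |x| ≤ M := by rw [_root_.abs_of_pos hx0]; exact hx.2
        have h2 : ‖Complex.exp (((b * x : ℝ) : ℂ) * Complex.I) - 1‖ ≤ |b| * M := by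
          calc _ ≤ |b * x| := norm_exp_real_mul_I_sub_one_le _
            _ = |b| * |x| := abs_mul _ _
            _ ≤ |b| * M := mul_le_mul_of_nonneg_left h1 (abs_nonneg b)
        exact mul_le_mul h1 h2 (norm_nonneg _) (by linarith)
      have hbb : |b| = 2 * Real.pi * |(β : ℝ)| * |lam| := by
        rw [hb_def, abs_mul, abs_mul, _root_.abs_of_nonneg (by positivity : (0:ℝ) ≤ 2 * Real.pi)]
      calc _ ≤ (M * (|b| * M)) * |M - 1| := hbM
        _ ≤ (M * (|b| * M)) * M := by
            apply mul_le_mul_of_nonneg_left _ (by positivity)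
            rw [_root_.abs_of_nonneg (by linarith)]; linarith
        _ = |b| * M ^ 3 := by ring
        _ = 2 * Real.pi * M ^ 3 * |(β : ℝ)| * |lam| := by rw [hbb]; ring
    calc _ ≤ ‖∫ x in (1 : ℝ)..M, (x : ℂ) * Complex.exp (((a * x ^ 2 : ℝ) : ℂ) * Complex.I)‖
          + ‖∫ x in (1 : ℝ)..M, (x : ℂ) * Complex.exp (((a * x ^ 2 : ℝ) : ℂ) * Complex.I)
              * (Complex.exp (((b * x : ℝ) : ℂ) * Complex.I) - 1)‖ := norm_add_le _ _
      _ ≤ _ := add_le_add hb1 hb2
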